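/- Let φ : [0,∞) → ℝ be a nonnegative, bounded, measurable function and let μ : [0,∞) → ℝ be a bounded measurable function. Then there exists a unique locally bounded measurable function λ̄ : [0,∞) → ℝ satisfying the Volterra integral equation λ̄(t) = μ(t) + ∫₀ᵗ φ(t−s) λ̄(s) ds for all t ≥ 0. -/

import Mathlib

open MeasureTheory Filter
open scoped ENNReal NNReal Topology

/-- A function `f : ℝ → ℝ` is locally bounded on `[0, ∞)`:
bounded on every compact interval `[0, T]`. -/
def LocallyBddOn (f : ℝ → ℝ) : Prop :=
  ∀ T : ℝ, ∃ C : ℝ, ∀ t ∈ Set.Icc (0 : ℝ) T, |f t| ≤ C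

/-- `lam` solves the Volterra integral equation
`λ̄(t) = μ(t) + ∫₀ᵗ φ(t−s) λ̄(s) ds` for all `t ≥ 0`. -/
def VolterraSol (φ μ lam : ℝ → ℝ) : Prop :=
  ∀ t : ℝ, 0 ≤ t → lam t = μ t + ∫ s in (0 : ℝ)..t, φ (t - s) * lam s

/-- Measurability of the guarded Volterra operator. -/
lemma volterra_measK (φ f : ℝ → ℝ) (hφ : Measurable φ) (hf : Measurable f) :
    Measurable fun t => if 0 ≤ t then ∫ s in (0:ℝ)..t, φ (t - s) * f s else 0 := by
  have key : ∀ t : ℝ, (if 0 ≤ t then ∫ s in (0:ℝ)..t, φ (t - s) * f s else 0)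
      = ∫ s, (if s ∈ Set.Ioc (0:ℝ) t then φ (t - s) * f s else 0) := by
    intro t
    by_cases ht : 0 ≤ t
    · rw [if_pos ht, intervalIntegral.integral_of_le ht,
        ← MeasureTheory.integral_indicator measurableSet_Ioc]
      simp only [Set.indicator_apply]
    · rw [if_neg ht]
      have : ∀ s : ℝ, (if s ∈ Set.Ioc (0:ℝ) t then φ (t - s) * f s else 0) = 0 := by
        intro s
        rw [if_neg]
        rintro ⟨h1, h2⟩
        exact ht (le_trans h1.le h2)
      simp only [this, integral_zero]
  simp only [key]
  have hmeas : StronglyMeasurable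
      (fun p : ℝ × ℝ => if p.2 ∈ Set.Ioc (0:ℝ) p.1 then φ (p.1 - p.2) * f p.2 else 0) := by
    apply Measurable.stronglyMeasurable
    have hset : MeasurableSet {p : ℝ × ℝ | p.2 ∈ Set.Ioc (0:ℝ) p.1} := by
      apply MeasurableSet.inter
      · exact measurableSet_lt measurable_const measurable_snd
      · exact measurableSet_le measurable_snd measurable_fst
    exact Measurable.ite hset
      ((hφ.comp (measurable_fst.sub measurable_snd)).mul (hf.comp measurable_snd))
      measurable_const
  exact hmeas.integral_prod_right'.measurable

/-- Integrability of the integrand. -/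
lemma volterra_intK (φ f : ℝ → ℝ) (hφ : Measurable φ) (hf : Measurable f)
    (C B t : ℝ) (ht : 0 ≤ t) (hφb : ∀ u : ℝ, 0 ≤ u → |φ u| ≤ C)
    (hfb : ∀ s ∈ Set.Icc (0:ℝ) t, |f s| ≤ B) :
    IntervalIntegrable (fun s => φ (t - s) * f s) volume 0 t := by
  rw [intervalIntegrable_iff_integrableOn_Ioc_of_le ht]
  have hm : AEStronglyMeasurable (fun s => φ (t - s) * f s) (volume.restrict (Set.Ioc 0 t)) :=
    ((hφ.comp (measurable_const.sub measurable_id)).mul hf).aestronglyMeasurable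
  refine Integrable.mono' (integrable_const (C * B)) hm ?_
  rw [ae_restrict_iff' measurableSet_Ioc]
  filter_upwards with s hs
  have hs0 : (0:ℝ) ≤ s := hs.1.le
  have hst : s ≤ t := hs.2
  have h1 : |φ (t - s)| ≤ C := hφb _ (by linarith)
  have h2 : |f s| ≤ B := hfb s ⟨hs0, hst⟩
  have hBnn : 0 ≤ B := le_trans (abs_nonneg _) h2
  calc ‖φ (t - s) * f s‖ = |φ (t - s)| * |f s| := abs_mul _ _
    _ ≤ C * B := mul_le_mul h1 h2 (abs_nonneg _) (le_trans (abs_nonneg _) h1)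

/-- The key iteration bound. -/
lemma volterra_boundK (φ f : ℝ → ℝ) (C A t : ℝ) (n : ℕ) (ht : 0 ≤ t)
    (hC : 0 ≤ C) (hA : 0 ≤ A)
    (hφb : ∀ u : ℝ, 0 ≤ u → |φ u| ≤ C)
    (hfb : ∀ s ∈ Set.Icc (0:ℝ) t, |f s| ≤ A * s ^ n / n.factorial) :
    |∫ s in (0:ℝ)..t, φ (t - s) * f s| ≤ C * A * t ^ (n + 1) / (n + 1).factorial := by
  have hg : IntervalIntegrable (fun s => C * A * s ^ n / n.factorial) volume 0 t :=
    (Continuous.intervalIntegrable (by continuity)) _ _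
  have hbd : ∀ᵐ s ∂(volume.restrict (Set.uIoc (0:ℝ) t)),
      ‖φ (t - s) * f s‖ ≤ C * A * s ^ n / n.factorial := by
    rw [Set.uIoc_of_le ht, ae_restrict_iff' measurableSet_Ioc]
    filter_upwards with s hs
    have hs0 : (0:ℝ) ≤ s := hs.1.le
    have hst : s ≤ t := hs.2
    have h1 : |φ (t - s)| ≤ C := hφb _ (by linarith)
    have h2 : |f s| ≤ A * s ^ n / n.factorial := hfb s ⟨hs0, hst⟩
    have hnn : (0:ℝ) ≤ A * s ^ n / n.factorial := by positivity
    calc ‖φ (t - s) * f s‖ = |φ (t - s)| * |f s| := abs_mul _ _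
      _ ≤ C * (A * s ^ n / n.factorial) := mul_le_mul h1 h2 (abs_nonneg _) hC
      _ = C * A * s ^ n / n.factorial := by ring
  have := intervalIntegral.norm_integral_le_abs_of_norm_le hbd hg
  have hval : (∫ s in (0:ℝ)..t, C * A * s ^ n / n.factorial)
      = C * A * t ^ (n + 1) / (n + 1).factorial := by
    have : (fun s : ℝ => C * A * s ^ n / n.factorial)
        = fun s : ℝ => (C * A / n.factorial) * s ^ n := by funext s; ring
    have hfact : (((n+1).factorial : ℕ) : ℝ) = ((n:ℝ) + 1) * n.factorial := by
      rw [Nat.factorial_succ]; push_cast; ring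
    have h0 : (0:ℝ) ^ (n+1) = 0 := zero_pow (Nat.succ_ne_zero n)
    have hne : ((n.factorial : ℝ)) ≠ 0 := by
      exact_mod_cast Nat.factorial_ne_zero n
    have hne1 : ((n:ℝ) + 1) ≠ 0 := by positivity
    rw [this, intervalIntegral.integral_const_mul, integral_pow, h0, sub_zero, hfact]
    rw [div_mul_div_comm, div_eq_div_iff (by positivity) (by positivity)]
    ring
  rw [hval] at this
  have hnn2 : (0:ℝ) ≤ C * A * t ^ (n + 1) / (n + 1).factorial := by positivity
  rw [Real.norm_eq_abs] at this
  exact this.trans (le_of_eq (abs_of_nonneg hnn2))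

/-- Existence and uniqueness of a locally bounded measurable solution to the
Volterra integral equation, for `φ` nonnegative, bounded and measurable, and
`μ` bounded and measurable. -/
theorem volterra_exists_unique
    (φ μ : ℝ → ℝ)
    (hφ_meas : Measurable φ)
    (hφ_nonneg : ∀ t : ℝ, 0 ≤ t → 0 ≤ φ t)
    (hφ_bdd : ∃ C : ℝ, ∀ t : ℝ, 0 ≤ t → φ t ≤ C)
    (hμ_meas : Measurable μ)
    (hμ_bdd : ∃ C : ℝ, ∀ t : ℝ, 0 ≤ t → |μ t| ≤ C) :
    ∃ lam : ℝ → ℝ,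
      (Measurable lam ∧ LocallyBddOn lam ∧ VolterraSol φ μ lam) ∧
      ∀ lam' : ℝ → ℝ, Measurable lam' → LocallyBddOn lam' → VolterraSol φ μ lam' →
        ∀ t : ℝ, 0 ≤ t → lam' t = lam t := by
  obtain ⟨C0, hC0⟩ := hφ_bdd
  obtain ⟨M0, hM0⟩ := hμ_bdd
  set C : ℝ := max C0 0 with hCdef
  set M : ℝ := max M0 0 with hMdef
  have hC : 0 ≤ C := le_max_right _ _
  have hM : 0 ≤ M := le_max_right _ _
  have hφC : ∀ u : ℝ, 0 ≤ u → |φ u| ≤ C := fun v hv =>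
    abs_le.2 ⟨by have := hφ_nonneg v hv; linarith,
      le_trans (hC0 v hv) (le_max_left _ _)⟩
  have hμM : ∀ t : ℝ, 0 ≤ t → |μ t| ≤ M := fun t ht =>
    le_trans (hM0 t ht) (le_max_left _ _)
  -- Picard iterates
  let u : ℕ → ℝ → ℝ := fun n => Nat.rec (fun t => if 0 ≤ t then μ t else 0)
      (fun _ g t => if 0 ≤ t then ∫ s in (0:ℝ)..t, φ (t - s) * g s else 0) n
  have u_zero : ∀ t, u 0 t = if 0 ≤ t then μ t else 0 := fun _ => rfl
  have u_succ : ∀ n t, u (n+1) t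
      = if 0 ≤ t then ∫ s in (0:ℝ)..t, φ (t - s) * u n s else 0 := fun _ _ => rfl
  have hu_meas : ∀ n, Measurable (u n) := by
    intro n
    induction n with
    | zero =>
      have : MeasurableSet {t : ℝ | 0 ≤ t} := measurableSet_Ici
      exact Measurable.ite this hμ_meas measurable_const
    | succ n ih => exact volterra_measK φ (u n) hφ_meas ih
  have hu_bdd : ∀ n, ∀ t : ℝ, 0 ≤ t →
      |u n t| ≤ (M * C ^ n) * t ^ n / n.factorial := by
    intro n
    induction n with
    | zero =>
      intro t ht
      rw [u_zero, if_pos ht]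
      simpa using hμM t ht
    | succ n ih =>
      intro t ht
      rw [u_succ, if_pos ht]
      have hb := volterra_boundK φ (u n) C (M * C ^ n) t n ht hC (by positivity) hφC
        (fun s hs => ih s hs.1)
      refine hb.trans (le_of_eq ?_)
      rw [pow_succ]
      ring
  have hu_neg : ∀ n, ∀ t : ℝ, t < 0 → u n t = 0 := by
    intro n t ht
    cases n with
    | zero => rw [u_zero, if_neg (not_le.2 ht)]
    | succ n => rw [u_succ, if_neg (not_le.2 ht)]
  -- dominating series
  have hg_sum : ∀ r : ℝ, Summable (fun n : ℕ => (M * C ^ n) * r ^ n / n.factorial) := by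
    intro r
    have : (fun n : ℕ => (M * C ^ n) * r ^ n / n.factorial)
        = fun n : ℕ => M * ((C * r) ^ n / n.factorial) := by
      funext n; rw [mul_pow]; ring
    rw [this]
    exact (Real.summable_pow_div_factorial (C * r)).mul_left M
  have hnorm_sum : ∀ t : ℝ, 0 ≤ t → Summable (fun n => |u n t|) := fun t ht =>
    Summable.of_nonneg_of_le (fun n => abs_nonneg _) (fun n => hu_bdd n t ht) (hg_sum t)
  have hu_sum : ∀ t : ℝ, Summable (fun n => u n t) := by
    intro t
    rcases le_or_gt 0 t with ht | ht
    · exact (hnorm_sum t ht).of_abs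
    · have : (fun n => u n t) = fun _ => (0:ℝ) := funext fun n => hu_neg n t ht
      rw [this]; exact summable_zero
  set lam : ℝ → ℝ := fun t => ∑' n, u n t with hlamdef
  -- measurability of lam
  have hlam_meas : Measurable lam := by
    apply measurable_of_tendsto_metrizable
      (f := fun N t => ∑ n ∈ Finset.range N, u n t) (fun N => by
        exact Finset.measurable_sum (Finset.range N) (fun n _ => hu_meas n))
    rw [tendsto_pi_nhds]
    exact fun t => (hu_sum t).hasSum.tendsto_sum_nat
  -- local boundedness of lam
  have hlam_bdd : LocallyBddOn lam := by
    intro T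
    set T' : ℝ := max T 0 with hT'def
    refine ⟨∑' n, (M * C ^ n) * T' ^ n / n.factorial, fun t ht => ?_⟩
    have ht0 : 0 ≤ t := ht.1
    have htT' : t ≤ T' := le_trans ht.2 (le_max_left _ _)
    calc |lam t| ≤ ∑' n, |u n t| := by
          simpa [Real.norm_eq_abs] using norm_tsum_le_tsum_norm
            (f := fun n => u n t) (by simpa [Real.norm_eq_abs] using hnorm_sum t ht0)
      _ ≤ ∑' n, (M * C ^ n) * T' ^ n / n.factorial := by
          refine Summable.tsum_le_tsum (fun n => ?_) (hnorm_sum t ht0) (hg_sum T')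
          refine (hu_bdd n t ht0).trans ?_
          gcongr
  -- lam solves the equation
  have hlam_sol : VolterraSol φ μ lam := by
    intro t ht
    have h0 : lam t = u 0 t + ∑' n, u (n+1) t := Summable.tsum_eq_zero_add (hu_sum t)
    rw [h0, u_zero, if_pos ht]
    congr 1
    simp only [u_succ, if_pos ht]
    -- swap sum and integral
    have hmeasn : ∀ n : ℕ, AEStronglyMeasurable (fun s => φ (t - s) * u n s)
        (volume.restrict (Set.Ioc (0:ℝ) t)) := fun n =>
      ((hφ_meas.comp (measurable_const.sub measurable_id)).mul (hu_meas n)).aestronglyMeasurable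
    have hBnn : ∀ n : ℕ, 0 ≤ C * ((M * C ^ n) * t ^ n / n.factorial) * t := by
      intro n; positivity
    have hfin : (∑' n : ℕ, ∫⁻ s in Set.Ioc (0:ℝ) t, ‖φ (t - s) * u n s‖₊) ≠ ⊤ := by
      have step1 : ∀ n : ℕ, (∫⁻ s in Set.Ioc (0:ℝ) t, ‖φ (t - s) * u n s‖₊)
          ≤ ENNReal.ofReal (C * ((M * C ^ n) * t ^ n / n.factorial) * t) := by
        intro n
        set B : ℝ := C * ((M * C ^ n) * t ^ n / n.factorial) with hBdef
        have hBnn' : 0 ≤ B := by positivity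
        calc (∫⁻ s in Set.Ioc (0:ℝ) t, ‖φ (t - s) * u n s‖₊)
            ≤ ∫⁻ _ in Set.Ioc (0:ℝ) t, ENNReal.ofReal B := by
              apply lintegral_mono_ae
              rw [ae_restrict_iff' measurableSet_Ioc]
              filter_upwards with s hs
              have hs0 : (0:ℝ) ≤ s := hs.1.le
              have hst : s ≤ t := hs.2
              have h1 : |φ (t - s)| ≤ C := hφC _ (by linarith)
              have h2 : |u n s| ≤ (M * C ^ n) * s ^ n / n.factorial := hu_bdd n s hs0
              have h3 : (M * C ^ n) * s ^ n / n.factorial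
                  ≤ (M * C ^ n) * t ^ n / n.factorial := by gcongr
              have hnorm : ‖φ (t - s) * u n s‖ ≤ B := by
                rw [Real.norm_eq_abs, abs_mul, hBdef]
                exact mul_le_mul h1 (h2.trans h3) (abs_nonneg _) hC
              calc (‖φ (t - s) * u n s‖₊ : ℝ≥0∞)
                  = ENNReal.ofReal ‖φ (t - s) * u n s‖ := by rw [ofReal_norm, enorm_eq_nnnorm]
                _ ≤ ENNReal.ofReal B := ENNReal.ofReal_le_ofReal hnorm
          _ = ENNReal.ofReal B * volume (Set.Ioc (0:ℝ) t) := setLIntegral_const _ _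
          _ = ENNReal.ofReal B * ENNReal.ofReal t := by rw [Real.volume_Ioc, sub_zero]
          _ = ENNReal.ofReal (B * t) := (ENNReal.ofReal_mul hBnn').symm
      have hsummable : Summable (fun n : ℕ => C * ((M * C ^ n) * t ^ n / n.factorial) * t) := by
        have : (fun n : ℕ => C * ((M * C ^ n) * t ^ n / n.factorial) * t)
            = fun n : ℕ => (C * M * t) * ((C * t) ^ n / n.factorial) := by
          funext n; rw [mul_pow]; ring
        rw [this]
        exact (Real.summable_pow_div_factorial (C * t)).mul_left _
      refine ne_top_of_le_ne_top ?_ (ENNReal.tsum_le_tsum step1)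
      rw [← ENNReal.ofReal_tsum_of_nonneg hBnn hsummable]
      exact ENNReal.ofReal_ne_top
    have hswap := MeasureTheory.integral_tsum hmeasn hfin
    have hrhs : (fun s => φ (t - s) * lam s) = fun s => ∑' n, φ (t - s) * u n s := by
      funext s
      exact (tsum_mul_left).symm
    rw [intervalIntegral.integral_of_le ht, hrhs, hswap]
    simp only [intervalIntegral.integral_of_le ht]
  -- conclusion
  refine ⟨lam, ⟨hlam_meas, hlam_bdd, hlam_sol⟩, ?_⟩
  intro lam' hm' hb' hs' t0 ht0
  set d : ℝ → ℝ := fun t => lam' t - lam t with hddef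
  obtain ⟨D1, hD1⟩ := hb' t0
  obtain ⟨D2, hD2⟩ := hlam_bdd t0
  set D : ℝ := D1 + D2 with hDdef
  have hD : ∀ s ∈ Set.Icc (0:ℝ) t0, |d s| ≤ D := by
    intro s hs
    calc |lam' s - lam s| ≤ |lam' s| + |lam s| := abs_sub _ _
      _ ≤ D1 + D2 := add_le_add (hD1 s hs) (hD2 s hs)
  have hD0 : 0 ≤ D := le_trans (abs_nonneg _) (hD t0 ⟨ht0, le_refl _⟩)
  have hint : ∀ (f : ℝ → ℝ), Measurable f → LocallyBddOn f → ∀ t : ℝ, 0 ≤ t →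
      IntervalIntegrable (fun s => φ (t - s) * f s) volume 0 t := by
    intro f hf hfb t ht
    obtain ⟨B, hB⟩ := hfb t
    exact volterra_intK φ f hφ_meas hf C B t ht hφC hB
  have heq : ∀ t : ℝ, 0 ≤ t → d t = ∫ s in (0:ℝ)..t, φ (t - s) * d s := by
    intro t ht
    have h1 := hs' t ht
    have h2 := hlam_sol t ht
    have i1 := hint lam' hm' hb' t ht
    have i2 := hint lam hlam_meas hlam_bdd t ht
    have : d t = (μ t + ∫ s in (0:ℝ)..t, φ (t - s) * lam' s)
        - (μ t + ∫ s in (0:ℝ)..t, φ (t - s) * lam s) := by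
      rw [hddef]; dsimp only; rw [h1, h2]
    rw [this]
    have hsub : (μ t + ∫ s in (0:ℝ)..t, φ (t - s) * lam' s)
        - (μ t + ∫ s in (0:ℝ)..t, φ (t - s) * lam s)
        = (∫ s in (0:ℝ)..t, φ (t - s) * lam' s) - ∫ s in (0:ℝ)..t, φ (t - s) * lam s := by
      ring
    rw [hsub, ← intervalIntegral.integral_sub i1 i2]
    apply intervalIntegral.integral_congr
    intro s _
    dsimp only
    ring
  have hind : ∀ n : ℕ, ∀ t ∈ Set.Icc (0:ℝ) t0, |d t| ≤ (D * C ^ n) * t ^ n / n.factorial := by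
    intro n
    induction n with
    | zero => intro t ht; simpa using hD t ht
    | succ n ih =>
      intro t ht
      rw [heq t ht.1]
      have hb := volterra_boundK φ d C (D * C ^ n) t n ht.1 hC (by positivity) hφC
        (fun s hs => ih s ⟨hs.1, le_trans hs.2 ht.2⟩)
      refine hb.trans (le_of_eq ?_)
      rw [pow_succ]; ring
  have habs : ∀ n : ℕ, |d t0| ≤ D * ((C * t0) ^ n / n.factorial) := by
    intro n
    refine (hind n t0 ⟨ht0, le_refl _⟩).trans (le_of_eq ?_)
    rw [mul_pow]; ring
  have hlim : Tendsto (fun n : ℕ => D * ((C * t0) ^ n / n.factorial)) atTop (𝓝 0) := by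
    have := (FloorSemiring.tendsto_pow_div_factorial_atTop (K := ℝ) (C * t0)).const_mul D
    simpa using this
  have h0 : |d t0| ≤ 0 := ge_of_tendsto' hlim habs
  have : d t0 = 0 := abs_eq_zero.1 (le_antisymm h0 (abs_nonneg _))
  have : lam' t0 - lam t0 = 0 := this
  linarith
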